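/- For all 1 ≤ m ≤ r, F(r,m) ≤ ⌈ m·r / (−log_2(1 − m·2^{−m})) ⌉; in particular F(r,m) is at most c_m · r for the constant c_m = m/(−log_2(1−m·2^{−m})) (up to rounding), so F(r,m) grows at most linearly in r for fixed m. -/

import Mathlib

/-- The property that `A` is generic `(r,m)`-erasure reducing, via the matrix
characterization. -/
def IsGenericReducing (r m : ℕ) (A : Set (Fin r → ZMod 2)) : Prop :=
  ∀ M : Matrix (Fin r) (Fin m) (ZMod 2), M.rank = m →
    ∃ a ∈ A, hammingNorm (Matrix.vecMul a M) = 1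

/-- `F r m`: the minimum cardinality of a generic `(r,m)`-erasure reducing set. -/
noncomputable def F (r m : ℕ) : ℕ :=
  sInf {n | ∃ A : Finset (Fin r → ZMod 2), IsGenericReducing r m ↑A ∧ A.card = n}

open Finset Matrix

section Aux

lemma GR.zmod2_ne_zero {x : ZMod 2} (h : x ≠ 0) : x = 1 := by revert h; revert x; decide

lemma GR.wt_single {m : ℕ} (i : Fin m) :
    hammingNorm (Pi.single i (1 : ZMod 2) : Fin m → ZMod 2) = 1 := by
  rw [hammingNorm]
  rw [show (univ.filter fun j => (Pi.single i (1:ZMod 2) : Fin m → ZMod 2) j ≠ 0) = {i} from ?_]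
  · simp
  · ext j
    simp only [mem_filter, mem_univ, true_and, mem_singleton]
    constructor
    · intro h; by_contra hne; rw [Pi.single_eq_of_ne hne] at h; exact h rfl
    · rintro rfl; simp

lemma GR.card_wt_one (m : ℕ) :
    Fintype.card {w : Fin m → ZMod 2 // hammingNorm w = 1} = m := by
  have hb := Fintype.card_of_bijective (f := fun i : Fin m => (⟨Pi.single i 1, GR.wt_single i⟩ :
      {w : Fin m → ZMod 2 // hammingNorm w = 1})) ?_
  · rw [← hb, Fintype.card_fin]
  constructor
  · intro i j h
    have h2 : (Pi.single i (1:ZMod 2) : Fin m → ZMod 2) i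
        = (Pi.single j (1:ZMod 2) : Fin m → ZMod 2) i := by
      have := congrArg Subtype.val h
      exact congrFun this i
    by_contra hne
    rw [Pi.single_eq_same, Pi.single_eq_of_ne hne] at h2
    exact one_ne_zero h2
  · rintro ⟨w, hw⟩
    rw [hammingNorm] at hw
    obtain ⟨i, hi⟩ := Finset.card_eq_one.mp hw
    have hmem : ∀ j : Fin m, w j ≠ 0 ↔ j = i := by
      intro j
      constructor
      · intro h
        have : j ∈ Finset.univ.filter fun k => w k ≠ 0 := by simp [h]
        rw [hi] at this; simpa using this
      · rintro rfl
        have : j ∈ Finset.univ.filter fun k => w k ≠ 0 := by rw [hi]; simp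
        simpa using this
    refine ⟨i, Subtype.ext ?_⟩
    show (Pi.single i (1:ZMod 2) : Fin m → ZMod 2) = w
    funext j
    by_cases hji : j = i
    · subst hji
      rw [Pi.single_eq_same]
      exact (GR.zmod2_ne_zero ((hmem j).mpr rfl)).symm
    · rw [Pi.single_eq_of_ne hji]
      by_contra h
      exact hji ((hmem j).mp (Ne.symm h))

lemma GR.count_good {r m : ℕ} (M : Matrix (Fin r) (Fin m) (ZMod 2)) (hM : M.rank = m)
    (hwt : Fintype.card {w : Fin m → ZMod 2 // hammingNorm w = 1} = m) :
    Fintype.card {a : Fin r → ZMod 2 // hammingNorm (Matrix.vecMul a M) = 1}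
      = m * 2 ^ (r - m) := by
  set φ : (Fin r → ZMod 2) →ₗ[ZMod 2] (Fin m → ZMod 2) := M.vecMulLinear with hφ
  have hrange : LinearMap.range φ = ⊤ := by
    apply Submodule.eq_top_of_finrank_eq
    have h1 : Mᵀ.rank = m := by rw [Matrix.rank_transpose]; exact hM
    rw [Matrix.rank, Matrix.mulVecLin_transpose] at h1
    rw [hφ, h1, Module.finrank_pi, Fintype.card_fin]
  obtain ⟨s, hs⟩ := φ.exists_rightInverse_of_surjective hrange
  have hs' : ∀ w, φ (s w) = w := fun w => DFunLike.congr_fun hs w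
  set K := LinearMap.ker φ with hKdef
  haveI : Fintype K := Fintype.ofFinite K
  let e : (Fin r → ZMod 2) ≃ (Fin m → ZMod 2) × K :=
    { toFun := fun v => (φ v, ⟨v - s (φ v), by
        simp [K, LinearMap.mem_ker, map_sub, hs']⟩)
      invFun := fun p => p.2.1 + s p.1
      left_inv := fun v => by simp
      right_inv := fun p => by
        obtain ⟨w, k, hk⟩ := p
        have hφk : φ k = 0 := hk
        refine Prod.ext ?_ (Subtype.ext ?_)
        · show φ (k + s w) = w
          rw [map_add, hφk, hs', zero_add]
        · show (k + s w) - s (φ (k + s w)) = k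
          rw [map_add, hφk, hs', zero_add, add_sub_cancel_right] }
  have hcards : (2:ℕ) ^ r = 2 ^ m * Fintype.card K := by
    have := Fintype.card_congr e
    simpa [Fintype.card_prod] using this
  have hmr : m ≤ r := by
    by_contra h
    push_neg at h
    have h1 : (2:ℕ)^r < 2^m := Nat.pow_lt_pow_right one_lt_two h
    have hKpos : 0 < Fintype.card K := Fintype.card_pos
    have h2 : (2:ℕ)^m ≤ 2^m * Fintype.card K := Nat.le_mul_of_pos_right _ hKpos
    rw [← hcards] at h2
    omega
  have hK : Fintype.card K = 2 ^ (r - m) := by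
    have h2 : (2:ℕ) ^ r = 2 ^ m * 2 ^ (r - m) := by
      rw [← pow_add]; congr 1; omega
    have := hcards.symm.trans h2
    exact Nat.eq_of_mul_eq_mul_left (by positivity) this
  have e2 : {a : Fin r → ZMod 2 // hammingNorm (Matrix.vecMul a M) = 1} ≃
      {w : Fin m → ZMod 2 // hammingNorm w = 1} × K := by
    refine (Equiv.subtypeEquiv e ?_).trans Equiv.prodSubtypeFstEquivSubtypeProd
    intro a
    exact Iff.rfl
  rw [Fintype.card_congr e2, Fintype.card_prod, hwt, hK]

lemma GR.exists_reducing (r m N : ℕ) (hm : 1 ≤ m) (hmr : m ≤ r)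
    (hN : 2 ^ (m * r) * (2 ^ m - m) ^ N ≤ 2 ^ (m * N)) :
    ∃ A : Finset (Fin r → ZMod 2), IsGenericReducing r m ↑A ∧ A.card ≤ N := by
  classical
  have hwt := GR.card_wt_one m
  set B : ℕ := 2 ^ (r - m) * (2 ^ m - m) with hB
  have hcardV : Fintype.card (Fin r → ZMod 2) = 2 ^ r := by simp [Fintype.card_fun]
  let bad : Matrix (Fin r) (Fin m) (ZMod 2) → Finset (Fin r → ZMod 2) :=
    fun M => univ.filter fun a => ¬ hammingNorm (Matrix.vecMul a M) = 1
  have hbadcard : ∀ M : Matrix (Fin r) (Fin m) (ZMod 2), M.rank = m → (bad M).card = B := by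
    intro M hM
    have hgood : (univ.filter fun a => hammingNorm (Matrix.vecMul a M) = 1).card
        = m * 2 ^ (r - m) := by
      rw [← Fintype.card_subtype]
      exact GR.count_good M hM hwt
    have hsum := Finset.card_filter_add_card_filter_not
      (s := (univ : Finset (Fin r → ZMod 2)))
      (p := fun a => hammingNorm (Matrix.vecMul a M) = 1)
    rw [Finset.card_univ, hcardV, hgood] at hsum
    have h2r : (2:ℕ) ^ r = 2 ^ (r - m) * 2 ^ m := by rw [← pow_add]; congr 1; omega
    have hsum' : m * 2 ^ (r - m) + (bad M).card = 2 ^ r := hsum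
    have hbe : (bad M).card = 2 ^ r - m * 2 ^ (r - m) := by
      set G := m * 2 ^ (r - m) with hG
      omega
    rw [hbe, hB, Nat.mul_sub, h2r, mul_comm m (2 ^ (r - m))]
  let badT : Matrix (Fin r) (Fin m) (ZMod 2) → Finset (Fin N → Fin r → ZMod 2) :=
    fun M => Fintype.piFinset fun _ => bad M
  have hbadT : ∀ M : Matrix (Fin r) (Fin m) (ZMod 2), M.rank = m → (badT M).card = B ^ N := by
    intro M hM
    simp [badT, Fintype.card_piFinset, hbadcard M hM]
  set R : Finset (Matrix (Fin r) (Fin m) (ZMod 2)) := univ.filter fun M => M.rank = m with hR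
  have hRcard : R.card ≤ 2 ^ (m * r) - 1 := by
    have h0 : (0 : Matrix (Fin r) (Fin m) (ZMod 2)) ∉ R := by
      simp only [hR, mem_filter, mem_univ, true_and, Matrix.rank_zero]
      omega
    have hsub : R ⊆ (univ.erase 0) := fun M hM =>
      Finset.mem_erase.mpr ⟨fun h => h0 (h ▸ hM), mem_univ M⟩
    have := Finset.card_le_card hsub
    rw [Finset.card_erase_of_mem (mem_univ _), Finset.card_univ] at this
    have hMc : Fintype.card (Matrix (Fin r) (Fin m) (ZMod 2)) = 2 ^ (m * r) := by
      rw [← Fintype.card_congr (Matrix.of : (Fin r → Fin m → ZMod 2) ≃ _)]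
      simp [Fintype.card_fun, ← pow_mul]
    omega
  set Bad := R.biUnion badT with hBad
  have hBadcard : Bad.card < 2 ^ (r * N) := by
    have h1 : Bad.card ≤ ∑ M ∈ R, (badT M).card := Finset.card_biUnion_le
    have h2 : ∑ M ∈ R, (badT M).card = R.card * B ^ N := by
      rw [Finset.sum_congr rfl fun M hM => hbadT M (by simpa [hR] using hM),
        Finset.sum_const, smul_eq_mul]
    have hBpos : 0 < B ^ N := by
      have h1 : m < 2 ^ m := (Nat.lt_two_pow_self (n := m))
      have h2 : 0 < B := by
        rw [hB]
        exact Nat.mul_pos (Nat.pow_pos (by norm_num)) (by omega)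
      exact pow_pos h2 N
    have h3 : R.card * B ^ N < 2 ^ (m * r) * B ^ N := by
      apply Nat.mul_lt_mul_of_lt_of_le _ le_rfl hBpos
      have : (1:ℕ) ≤ 2 ^ (m*r) := Nat.one_le_two_pow
      omega
    have h4 : 2 ^ (m * r) * B ^ N ≤ 2 ^ (r * N) := by
      have hBN : B ^ N = 2 ^ ((r - m) * N) * (2 ^ m - m) ^ N := by
        rw [hB, mul_pow, pow_mul]
      calc 2 ^ (m * r) * B ^ N
          = 2 ^ ((r - m) * N) * (2 ^ (m * r) * (2 ^ m - m) ^ N) := by rw [hBN]; ring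
        _ ≤ 2 ^ ((r - m) * N) * 2 ^ (m * N) := Nat.mul_le_mul_left _ hN
        _ = 2 ^ ((r - m) * N + m * N) := by rw [← pow_add]
        _ = 2 ^ (r * N) := by rw [← Nat.add_mul, Nat.sub_add_cancel hmr]
    calc Bad.card ≤ R.card * B ^ N := h1.trans_eq h2
      _ < 2 ^ (m * r) * B ^ N := h3
      _ ≤ 2 ^ (r * N) := h4
  obtain ⟨f, hf⟩ : ∃ f : Fin N → Fin r → ZMod 2, f ∉ Bad := by
    by_contra h
    push_neg at h
    have hsub : (univ : Finset (Fin N → Fin r → ZMod 2)) ⊆ Bad := fun f _ => h f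
    have hle := Finset.card_le_card hsub
    rw [Finset.card_univ] at hle
    have hTc : Fintype.card (Fin N → Fin r → ZMod 2) = 2 ^ (r * N) := by
      simp [Fintype.card_fun, hcardV, ← pow_mul]
    omega
  refine ⟨univ.image f, ?_, ?_⟩
  · intro M hM
    have : f ∉ badT M := fun hmem => hf (Finset.mem_biUnion.mpr
      ⟨M, by simp [hR, hM], hmem⟩)
    rw [Fintype.mem_piFinset] at this
    push_neg at this
    obtain ⟨i, hi⟩ := this
    refine ⟨f i, by simp, ?_⟩
    have : ¬ ¬ hammingNorm (Matrix.vecMul (f i) M) = 1 := by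
      intro hcon
      exact hi (by simp [bad, hcon])
    exact not_not.mp this
  · calc (univ.image f).card ≤ univ.card := Finset.card_image_le
      _ = N := by simp

lemma GR.two_mul_le (m : ℕ) (hm : 1 ≤ m) : 2 * m ≤ 2 ^ m := by
  induction m with
  | zero => omega
  | succ n ih =>
    rcases Nat.lt_or_ge n 1 with h | h
    · interval_cases n <;> norm_num
    · have := ih h
      rw [pow_succ]
      omega

lemma GR.analytic (m r N : ℕ) (hm : 1 ≤ m)
    (hN : ((m : ℝ) * r) / (-(Real.logb 2 (1 - (m : ℝ) / 2 ^ m))) ≤ N) :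
    2 ^ (m * r) * (2 ^ m - m) ^ N ≤ 2 ^ (m * N) := by
  have hm2 : (m : ℝ) < 2 ^ m := by exact_mod_cast (Nat.lt_two_pow_self (n := m))
  have h2m : (0:ℝ) < 2 ^ m := by positivity
  set x : ℝ := (m : ℝ) / 2 ^ m with hx
  have hx0 : 0 < x := by positivity
  have hxh : x ≤ 1 / 2 := by
    rw [hx, div_le_div_iff₀ h2m (by norm_num)]
    have := GR.two_mul_le m hm
    calc (m:ℝ) * 2 = 2 * m := by ring
      _ ≤ 2 ^ m := by exact_mod_cast this
      _ = 1 * 2 ^ m := by ring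
  set q : ℝ := 1 - x with hq
  have hq0 : 0 < q := by rw [hq]; linarith
  have hq1 : q < 1 := by rw [hq]; linarith
  set L : ℝ := Real.logb 2 q with hL
  have hLneg : L < 0 := Real.logb_neg one_lt_two hq0 hq1
  have hNL : (N : ℝ) * (-L) ≥ (m : ℝ) * r := by
    rw [div_le_iff₀ (by linarith : (0:ℝ) < -L)] at hN
    linarith
  have hqN : q ^ N ≤ (2:ℝ) ^ (-((m:ℝ) * r)) := by
    have hlog : Real.logb 2 (q ^ N) = N * L := by rw [Real.logb_pow]
    have h1 : q ^ N = (2:ℝ) ^ Real.logb 2 (q ^ N) :=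
      (Real.rpow_logb (by norm_num) (by norm_num) (pow_pos hq0 N)).symm
    rw [h1, hlog]
    apply (Real.rpow_le_rpow_left_iff (by norm_num : (1:ℝ) < 2)).mpr
    linarith
  have hkey : (2:ℝ) ^ (m * r) * q ^ N ≤ 1 := by
    have h2 : ((2:ℝ)) ^ (m * r) = (2:ℝ) ^ (((m * r : ℕ)) : ℝ) := by
      rw [Real.rpow_natCast]
    calc (2:ℝ) ^ (m * r) * q ^ N ≤ (2:ℝ) ^ (m * r) * (2:ℝ) ^ (-((m:ℝ) * r)) := by
          apply mul_le_mul_of_nonneg_left hqN (by positivity)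
      _ = 1 := by
          rw [h2, ← Real.rpow_add (by norm_num)]
          push_cast
          norm_num
  have hsub : ((2 ^ m - m : ℕ) : ℝ) = 2 ^ m - m := by
    push_cast [Nat.cast_sub ((Nat.lt_two_pow_self (n := m))).le]
    norm_num
  rw [← Nat.cast_le (α := ℝ)]
  push_cast [hsub]
  have hfac : ((2:ℝ) ^ m - m) = q * 2 ^ m := by
    rw [hq, hx]; field_simp
  rw [hfac, mul_pow, ← pow_mul]
  calc (2:ℝ) ^ (m * r) * (q ^ N * 2 ^ (m * N))
      = ((2:ℝ) ^ (m * r) * q ^ N) * 2 ^ (m * N) := by ring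
    _ ≤ 1 * 2 ^ (m * N) := by
        apply mul_le_mul_of_nonneg_right hkey (by positivity)
    _ = 2 ^ (m * N) := by ring

end Aux

theorem stmt10 (r m : ℕ) (hm : 1 ≤ m) (hmr : m ≤ r) :
    F r m ≤ ⌈(m * r : ℝ) / (-(Real.logb 2 (1 - (m : ℝ) / 2 ^ m)))⌉₊ := by
  set N := ⌈(m * r : ℝ) / (-(Real.logb 2 (1 - (m : ℝ) / 2 ^ m)))⌉₊ with hNdef
  have hceil : ((m : ℝ) * r) / (-(Real.logb 2 (1 - (m : ℝ) / 2 ^ m))) ≤ N := by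
    rw [hNdef]
    exact_mod_cast Nat.le_ceil _
  have hN := GR.analytic m r N hm hceil
  obtain ⟨A, hred, hcard⟩ := GR.exists_reducing r m N hm hmr hN
  have hmem : A.card ∈ {n | ∃ A : Finset (Fin r → ZMod 2),
      IsGenericReducing r m ↑A ∧ A.card = n} := ⟨A, hred, rfl⟩
  exact le_trans (Nat.sInf_le hmem) hcard
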